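/- Let H be an n×n real diagonal matrix and define, for n×n complex matrices x with ⁅x,H⁆ ≠ 0, the vector field Z(x) = ‖⁅x,H⁆‖⁻² · ⁅x, ⁅xᴴ, H⁆⁆. Then there exists a constant M > 0, depending only on the matrix bracket (i.e. satisfying ‖⁅X,Y⁆‖ ≤ M‖X‖‖Y‖ for all X,Y), such that for every x with ⁅x,H⁆ ≠ 0 the map Z is real-differentiable at x and its Fréchet derivative satisfies ‖dZ_x‖ ≤ 2M(‖ad(H)‖ + M‖H‖) · ‖x‖ / ‖⁅x,H⁆‖², where ‖ad(H)‖ is the operator norm of the linear map Y ↦ ⁅H,Y⁆ and ‖dZ_x‖ is the operator norm of the derivative of Z at x (as a map of real normed spaces). -/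

import Mathlib

open Matrix

attribute [local instance] Matrix.frobeniusNormedAddCommGroup Matrix.frobeniusNormedSpace
attribute [local instance] LieRing.ofAssociativeRing

@[reducible] noncomputable def frobeniusMatrixTopology (n : ℕ) : TopologicalSpace (Matrix (Fin n) (Fin n) ℂ) :=
  @UniformSpace.toTopologicalSpace _ (@PseudoMetricSpace.toUniformSpace _
    (@SeminormedAddCommGroup.toPseudoMetricSpace _
      (@NormedAddCommGroup.toSeminormedAddCommGroup _ Matrix.frobeniusNormedAddCommGroup)))

attribute [local instance 2000] frobeniusMatrixTopology

/-- The real diagonal matrix `H`, viewed as a complex matrix. -/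
noncomputable def Hmat (n : ℕ) (h : Fin n → ℝ) : Matrix (Fin n) (Fin n) ℂ :=
  Matrix.diagonal (fun i => (h i : ℂ))

/-- The transversal vector field `Z(x) = ‖⁅x,H⁆‖⁻² • ⁅x, ⁅xᴴ, H⁆⁆`. -/
noncomputable def Zfield (n : ℕ) (h : Fin n → ℝ) :
    Matrix (Fin n) (Fin n) ℂ → Matrix (Fin n) (Fin n) ℂ :=
  fun x => (‖⁅x, Hmat n h⁆‖ ^ 2)⁻¹ • ⁅x, ⁅xᴴ, Hmat n h⁆⁆

/-- Real inner product structure on complex matrices, compatible with the Frobenius norm. -/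
noncomputable def matFrobInner (n : ℕ) :
    InnerProductSpace ℝ (Matrix (Fin n) (Fin n) ℂ) :=
  { inner := fun x y => inner ℝ (WithLp.toLp 2 fun i => WithLp.toLp 2 (x i))
      (WithLp.toLp 2 fun i => WithLp.toLp 2 (y i))
    norm_sq_eq_re_inner := fun x =>
      norm_sq_eq_re_inner (𝕜 := ℝ) (WithLp.toLp 2 fun i => WithLp.toLp 2 (x i))
    conj_inner_symm := fun x y => inner_conj_symm (𝕜 := ℝ) _ _
    add_left := fun x y z => by
      show inner ℝ (WithLp.toLp 2 fun i => WithLp.toLp 2 ((x + y) i)) _ = _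
      rw [← inner_add_left]; rfl
    smul_left := fun x y r => by
      show inner ℝ (WithLp.toLp 2 fun i => WithLp.toLp 2 ((r • x) i)) _ = _
      rw [← inner_smul_left]; rfl }

attribute [local instance] matFrobInner

section aux

variable (n : ℕ) (h : Fin n → ℝ)

/-- helper: the bracket bound for the Frobenius norm -/
lemma bracket_bound (X Y : Matrix (Fin n) (Fin n) ℂ) : ‖⁅X, Y⁆‖ ≤ 2 * ‖X‖ * ‖Y‖ := by
  rw [Ring.lie_def]
  refine le_trans (norm_sub_le _ _) ?_
  have h1 := Matrix.frobenius_norm_mul X Y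
  have h2 := Matrix.frobenius_norm_mul Y X
  nlinarith [norm_nonneg X, norm_nonneg Y]

/-- `v ↦ ⁅v, H⁆` as a real-linear map. -/
noncomputable def Kmap : Matrix (Fin n) (Fin n) ℂ →ₗ[ℝ] Matrix (Fin n) (Fin n) ℂ where
  toFun v := ⁅v, Hmat n h⁆
  map_add' a b := add_lie a b _
  map_smul' r a := smul_lie r a _

/-- `v ↦ ⁅vᴴ, H⁆` as a real-linear map. -/
noncomputable def Cmap : Matrix (Fin n) (Fin n) ℂ →ₗ[ℝ] Matrix (Fin n) (Fin n) ℂ where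
  toFun v := ⁅vᴴ, Hmat n h⁆
  map_add' a b := by
    show ⁅(a + b)ᴴ, Hmat n h⁆ = ⁅aᴴ, Hmat n h⁆ + ⁅bᴴ, Hmat n h⁆
    rw [conjTranspose_add, add_lie]
  map_smul' r a := by
    show ⁅(r • a)ᴴ, Hmat n h⁆ = r • ⁅aᴴ, Hmat n h⁆
    rw [conjTranspose_smul, star_trivial, smul_lie]

lemma Hmat_herm : (Hmat n h)ᴴ = Hmat n h := by
  ext i j
  rw [Hmat, conjTranspose_apply]
  by_cases hij : j = i
  · subst hij; simp [diagonal_apply_eq, Complex.conj_ofReal]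
  · simp [diagonal_apply_ne, hij, Ne.symm hij]

lemma norm_bracket_conjTranspose (v : Matrix (Fin n) (Fin n) ℂ) :
    ‖⁅vᴴ, Hmat n h⁆‖ = ‖⁅v, Hmat n h⁆‖ := by
  have key : ⁅vᴴ, Hmat n h⁆ = (-⁅v, Hmat n h⁆)ᴴ := by
    rw [Ring.lie_def, Ring.lie_def]
    rw [neg_sub, conjTranspose_sub, conjTranspose_mul, conjTranspose_mul, Hmat_herm]
  rw [key, Matrix.frobenius_norm_conjTranspose, norm_neg]

end aux

set_option maxHeartbeats 2000000 in
/-- There is a constant `M > 0` bounding the matrix bracket, `‖⁅X,Y⁆‖ ≤ M ‖X‖ ‖Y‖`,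
such that at every point `x` with `⁅x,H⁆ ≠ 0` the vector field `Z` is (real)
differentiable and its Fréchet derivative satisfies
`‖dZ_x‖ ≤ 2 M (‖ad H‖ + M ‖H‖) ‖x‖ / ‖⁅x,H⁆‖²`, where `ad H` is the operator
`Y ↦ ⁅H,Y⁆`. -/
theorem norm_fderiv_Zfield_le
    (n : ℕ) (h : Fin n → ℝ) :
    ∃ M > (0 : ℝ),
      (∀ X Y : Matrix (Fin n) (Fin n) ℂ, ‖⁅X, Y⁆‖ ≤ M * ‖X‖ * ‖Y‖) ∧
      ∀ x : Matrix (Fin n) (Fin n) ℂ, ⁅x, Hmat n h⁆ ≠ 0 →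
        DifferentiableAt ℝ (Zfield n h) x ∧
        ‖fderiv ℝ (Zfield n h) x‖ ≤
          2 * M * (‖LinearMap.toContinuousLinearMap
              (LieAlgebra.ad ℝ (Matrix (Fin n) (Fin n) ℂ) (Hmat n h))‖
            + M * ‖Hmat n h‖) * ‖x‖ / ‖⁅x, Hmat n h⁆‖ ^ 2 := by
  classical
  set H := Hmat n h with hH
  refine ⟨2, two_pos, bracket_bound n, ?_⟩
  intro x hx
  set adC := LinearMap.toContinuousLinearMap
      (LieAlgebra.ad ℝ (Matrix (Fin n) (Fin n) ℂ) (Hmat n h)) with hadC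
  have hadC_apply : ∀ v : (Matrix (Fin n) (Fin n) ℂ), adC v = ⁅H, v⁆ := fun v => rfl
  set A := ‖adC‖ with hA
  have hA0 : 0 ≤ A := norm_nonneg _
  have hbr : ∀ X Y : (Matrix (Fin n) (Fin n) ℂ), ‖⁅X, Y⁆‖ ≤ 2 * ‖X‖ * ‖Y‖ := bracket_bound n
  have hKv : ∀ v : (Matrix (Fin n) (Fin n) ℂ), ‖⁅v, H⁆‖ ≤ A * ‖v‖ := by
    intro v
    have hv : ⁅v, H⁆ = -adC v := by rw [hadC_apply, ← lie_skew]
    rw [hv, norm_neg]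
    exact adC.le_opNorm v
  have hA2 : A ≤ 2 * ‖H‖ := by
    apply ContinuousLinearMap.opNorm_le_bound _ (by positivity)
    intro v
    rw [hadC_apply]
    exact hbr H v
  -- continuous linear maps
  set Kc := LinearMap.toContinuousLinearMap (Kmap n h) with hKc
  set Cc := LinearMap.toContinuousLinearMap (Cmap n h) with hCc
  have hKc_apply : ∀ v : (Matrix (Fin n) (Fin n) ℂ), Kc v = ⁅v, H⁆ := fun v => rfl
  have hCc_apply : ∀ v : (Matrix (Fin n) (Fin n) ℂ), Cc v = ⁅vᴴ, H⁆ := fun v => rfl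
  have hCcnorm : ∀ v : (Matrix (Fin n) (Fin n) ℂ), ‖Cc v‖ = ‖⁅v, H⁆‖ := by
    intro v
    rw [hCc_apply]
    exact norm_bracket_conjTranspose n h v
  set c := ‖⁅x, H⁆‖ with hcdef
  have hc : 0 < c := norm_pos_iff.mpr hx
  have hqx : ‖Kc x‖ = c := by rw [hKc_apply]
  have hqne : ‖Kc x‖ ^ 2 ≠ 0 := by rw [hqx]; positivity
  -- derivative of q = ‖⁅·,H⁆‖²
  have hq : HasFDerivAt (fun y => ‖Kc y‖ ^ 2) (2 • (innerSL ℝ (Kc x)).comp Kc) x :=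
    (Kc.hasFDerivAt).norm_sq
  set q' := (2 • (innerSL ℝ (Kc x)).comp Kc : (Matrix (Fin n) (Fin n) ℂ) →L[ℝ] ℝ) with hq'
  have hinv0 : HasFDerivAt Inv.inv
      (-(ContinuousLinearMap.mulLeftRight ℝ ℝ (‖Kc x‖ ^ 2)⁻¹ (‖Kc x‖ ^ 2)⁻¹))
      (‖Kc x‖ ^ 2) := hasFDerivAt_inv' hqne
  set f' := ((-(ContinuousLinearMap.mulLeftRight ℝ ℝ (‖Kc x‖ ^ 2)⁻¹ (‖Kc x‖ ^ 2)⁻¹)).comp q' :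
      (Matrix (Fin n) (Fin n) ℂ) →L[ℝ] ℝ) with hf'
  have hinv : HasFDerivAt (fun y => (‖Kc y‖ ^ 2)⁻¹) f' x := hinv0.comp x hq
  -- the bilinear bracket
  have hBr : IsBoundedBilinearMap ℝ (fun p : (Matrix (Fin n) (Fin n) ℂ) × (Matrix (Fin n) (Fin n) ℂ) => ⁅p.1, p.2⁆) :=
    { add_left := fun a b y => add_lie a b y
      smul_left := fun r a y => smul_lie r a y
      add_right := fun a y₁ y₂ => lie_add a y₁ y₂
      smul_right := fun r a y => lie_smul r a y
      bound := ⟨2, two_pos, fun a b => hbr a b⟩ }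
  have hpair : HasFDerivAt (fun y : (Matrix (Fin n) (Fin n) ℂ) => (y, Cc y))
      ((ContinuousLinearMap.id ℝ (Matrix (Fin n) (Fin n) ℂ)).prod Cc) x :=
    ((ContinuousLinearMap.id ℝ (Matrix (Fin n) (Fin n) ℂ)).prod Cc).hasFDerivAt
  set g' := ((hBr.deriv (x, Cc x)).comp ((ContinuousLinearMap.id ℝ (Matrix (Fin n) (Fin n) ℂ)).prod Cc) :
      (Matrix (Fin n) (Fin n) ℂ) →L[ℝ] (Matrix (Fin n) (Fin n) ℂ)) with hg'
  have hg : HasFDerivAt (fun y : (Matrix (Fin n) (Fin n) ℂ) => ⁅y, Cc y⁆) g' x :=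
    by have := (hBr.hasFDerivAt (x, Cc x)).comp x hpair; exact this
  set Z' := ((‖Kc x‖ ^ 2)⁻¹ • g' + f'.smulRight ⁅x, Cc x⁆ : (Matrix (Fin n) (Fin n) ℂ) →L[ℝ] (Matrix (Fin n) (Fin n) ℂ)) with hZ'
  have hfun : Zfield n h = fun y => (‖Kc y‖ ^ 2)⁻¹ • ⁅y, Cc y⁆ := by
    funext y
    simp only [Zfield]
    rw [← hH, ← hKc_apply y, ← hCc_apply y]
  have hZ : HasFDerivAt (Zfield n h) Z' x := by
    rw [hfun]
    exact hinv.smul hg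
  refine ⟨hZ.differentiableAt, ?_⟩
  rw [hZ.fderiv]
  clear_value Kc Cc adC H
  -- now bound ‖Z'‖
  apply ContinuousLinearMap.opNorm_le_bound _ (by positivity)
  intro v
  have hg'v : g' v = ⁅x, Cc v⁆ + ⁅v, Cc x⁆ := by
    rw [hg']
    simp [IsBoundedBilinearMap.deriv_apply]
  have hCv : ‖Cc v‖ ≤ A * ‖v‖ := by rw [hCcnorm]; exact hKv v
  have hCx : ‖Cc x‖ = c := by rw [hCcnorm, hcdef]
  have hq'v : |q' v| ≤ 2 * (c * (A * ‖v‖)) := by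
    have hval : q' v = 2 * (inner ℝ (Kc x) (Kc v) : ℝ) := by
      rw [hq']
      simp [two_smul]
      change inner ℝ (Kc x) (Kc v) + inner ℝ (Kc x) (Kc v) = _
      ring
    have h1 : |(inner ℝ (Kc x) (Kc v) : ℝ)| ≤ ‖Kc x‖ * ‖Kc v‖ := abs_real_inner_le_norm _ _
    rw [hqx] at h1
    have h2 : ‖Kc v‖ ≤ A * ‖v‖ := by rw [hKc_apply]; exact hKv v
    rw [hval, abs_mul, abs_two]
    have h3 : c * ‖Kc v‖ ≤ c * (A * ‖v‖) := mul_le_mul_of_nonneg_left h2 hc.le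
    nlinarith [abs_nonneg (inner ℝ (Kc x) (Kc v) : ℝ)]
  have hgx : ‖⁅x, Cc x⁆‖ ≤ 2 * ‖x‖ * c := by
    have h1 := hbr x (Cc x)
    rwa [hCx] at h1
  have hg'vbound : ‖g' v‖ ≤ 2 * ‖x‖ * (A * ‖v‖) + 2 * ‖v‖ * c := by
    rw [hg'v]
    refine le_trans (norm_add_le _ _) (add_le_add ?_ ?_)
    · refine (hbr x (Cc v)).trans ?_
      exact mul_le_mul_of_nonneg_left hCv (by positivity)
    · have h1 := hbr v (Cc x)
      rwa [hCx] at h1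
  have hZ'vrepr : Z' v = (‖Kc x‖ ^ 2)⁻¹ • g' v
      + (-((‖Kc x‖ ^ 2)⁻¹ * q' v * (‖Kc x‖ ^ 2)⁻¹)) • ⁅x, Cc x⁆ := by
    rw [hZ']
    simp [hf', ContinuousLinearMap.smulRight_apply]
  have hZ'v : ‖Z' v‖ ≤ (c ^ 2)⁻¹ * (2 * ‖x‖ * (A * ‖v‖) + 2 * ‖v‖ * c)
      + (c ^ 2)⁻¹ * (2 * (c * (A * ‖v‖))) * (c ^ 2)⁻¹ * (2 * ‖x‖ * c) := by
    rw [hZ'vrepr]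
    refine le_trans (norm_add_le _ _) (add_le_add ?_ ?_)
    · rw [norm_smul, Real.norm_eq_abs, hqx, abs_inv, abs_of_nonneg (by positivity : (0:ℝ) ≤ c ^ 2)]
      exact mul_le_mul_of_nonneg_left hg'vbound (by positivity)
    · rw [norm_smul, Real.norm_eq_abs, abs_neg, abs_mul, abs_mul, abs_inv, hqx,
        abs_of_nonneg (by positivity : (0:ℝ) ≤ c ^ 2)]
      have h4 : (c ^ 2)⁻¹ * |q' v| * (c ^ 2)⁻¹
          ≤ (c ^ 2)⁻¹ * (2 * (c * (A * ‖v‖))) * (c ^ 2)⁻¹ := by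
        refine mul_le_mul_of_nonneg_right ?_ (by positivity)
        exact mul_le_mul_of_nonneg_left hq'v (by positivity)
      have hb : (0:ℝ) ≤ (c ^ 2)⁻¹ * (2 * (c * (A * ‖v‖))) * (c ^ 2)⁻¹ :=
        mul_nonneg (mul_nonneg (inv_nonneg.mpr (sq_nonneg c))
          (mul_nonneg two_pos.le (mul_nonneg hc.le (mul_nonneg hA0 (norm_nonneg v)))))
          (inv_nonneg.mpr (sq_nonneg c))
      exact mul_le_mul h4 hgx (norm_nonneg _) hb
  refine hZ'v.trans ?_
  have hcX : c ≤ 2 * ‖x‖ * ‖H‖ := hbr x H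
  have hx0 : (0 : ℝ) ≤ ‖x‖ := norm_nonneg _
  have hv0 : (0 : ℝ) ≤ ‖v‖ := norm_nonneg _
  have hH0 : (0 : ℝ) ≤ ‖H‖ := norm_nonneg _
  rw [div_mul_eq_mul_div, le_div_iff₀ (by positivity : (0:ℝ) < c ^ 2)]
  have e1 : (c ^ 2)⁻¹ * (2 * (c * (A * ‖v‖))) * (c ^ 2)⁻¹ * (2 * ‖x‖ * c) * c ^ 2
      = 4 * A * ‖x‖ * ‖v‖ * c⁻¹ * c := by
    field_simp
    ring
  have e1' : (c ^ 2)⁻¹ * (2 * (c * (A * ‖v‖))) * (c ^ 2)⁻¹ * (2 * ‖x‖ * c) * c ^ 2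
      = 4 * A * ‖x‖ * ‖v‖ := by
    rw [e1, mul_assoc, inv_mul_cancel₀ hc.ne', mul_one]
  have e2 : (c ^ 2)⁻¹ * (2 * ‖x‖ * (A * ‖v‖) + 2 * ‖v‖ * c) * c ^ 2
      = 2 * ‖x‖ * A * ‖v‖ + 2 * ‖v‖ * c := by
    field_simp
  rw [add_mul, e1', e2]
  nlinarith [mul_le_mul_of_nonneg_right hA2 (mul_nonneg hx0 hv0),
    mul_le_mul_of_nonneg_right hcX hv0, mul_nonneg (mul_nonneg hA0 hx0) hv0,
    mul_nonneg (mul_nonneg hH0 hx0) hv0]
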